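/- The function u(x,t) = 10 − (1/2)·cos(5 + t) + 4·tanh(6 + 1.6·t − 0.4·x − (2/25)·sin(5 + t)) solves the variable-coefficient forced Burgers equation u_t + (2/5)·u·u_x − 2·u_xx = (1/2)·sin(5 + t) for all (x,t) ∈ ℝ². (This is the vc-FBE with nonlinear coefficient a = 2/5, dispersive coefficient b = −2 and external-force term m(t) = (1/2)·sin(t + 5), arising from the parameter choice b1 = 0, b2 = −2, m(t) = (1/2)·sin(t+5), p = −5, q = 10, L = 4, w = 6 in the general solution formula.) -/

import Mathlib

open Real

lemma hasDerivAt_tanh' (y : ℝ) :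
    HasDerivAt Real.tanh (1 - Real.tanh y ^ 2) y := by
  have hc : Real.cosh y ≠ 0 := (Real.cosh_pos y).ne'
  have h : HasDerivAt (fun z => Real.sinh z / Real.cosh z)
      ((Real.cosh y * Real.cosh y - Real.sinh y * Real.sinh y) / Real.cosh y ^ 2) y :=
    (Real.hasDerivAt_sinh y).div (Real.hasDerivAt_cosh y) hc
  have heq : (fun z => Real.sinh z / Real.cosh z) = Real.tanh := by
    funext z; rw [Real.tanh_eq_sinh_div_cosh]
  rw [heq] at h
  convert h using 1
  rw [Real.tanh_eq_sinh_div_cosh]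
  field_simp

lemma hasDerivAt_theta_x (t x : ℝ) :
    HasDerivAt (fun x' : ℝ => 6 + 1.6 * t - 0.4 * x' - (2 / 25) * Real.sin (5 + t))
      (-0.4) x := by
  have h : HasDerivAt (fun x' : ℝ => 6 + 1.6 * t - 0.4 * x' - (2 / 25) * Real.sin (5 + t))
      (0 - 0.4 * 1 - 0) x :=
    (((hasDerivAt_const x (6 + 1.6 * t)).sub ((hasDerivAt_id x).const_mul 0.4)).sub
      (hasDerivAt_const x _))
  simpa using h

lemma hasDerivAt_u_x (t x : ℝ) :
    HasDerivAt (fun x' => 10 - (1 / 2) * Real.cos (5 + t)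
        + 4 * Real.tanh (6 + 1.6 * t - 0.4 * x' - (2 / 25) * Real.sin (5 + t)))
      (4 * ((1 - Real.tanh (6 + 1.6 * t - 0.4 * x - (2 / 25) * Real.sin (5 + t)) ^ 2) * (-0.4)))
      x := by
  have h2 := (hasDerivAt_tanh' (6 + 1.6 * t - 0.4 * x - (2 / 25) * Real.sin (5 + t))).comp x
    (hasDerivAt_theta_x t x)
  exact (h2.const_mul 4).const_add (10 - (1 / 2) * Real.cos (5 + t))

lemma deriv_u_x (t x : ℝ) :
    deriv (fun x' => 10 - (1 / 2) * Real.cos (5 + t)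
        + 4 * Real.tanh (6 + 1.6 * t - 0.4 * x' - (2 / 25) * Real.sin (5 + t))) x
    = 4 * ((1 - Real.tanh (6 + 1.6 * t - 0.4 * x - (2 / 25) * Real.sin (5 + t)) ^ 2) * (-0.4)) :=
  (hasDerivAt_u_x t x).deriv

/-- `u(x,t) = 10 − (1/2)·cos(5+t) + 4·tanh(6 + 1.6t − 0.4x − (2/25)·sin(5+t))`
solves the forced equation `u_t + (2/5)·u·u_x − 2·u_xx = (1/2)·sin(5+t)` on all of ℝ². -/
theorem example3_solves_vcFBE :
    ∀ x t : ℝ,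
      deriv (fun t' => 10 - (1 / 2) * Real.cos (5 + t')
          + 4 * Real.tanh (6 + 1.6 * t' - 0.4 * x - (2 / 25) * Real.sin (5 + t'))) t
        + (2 / 5) * (10 - (1 / 2) * Real.cos (5 + t)
            + 4 * Real.tanh (6 + 1.6 * t - 0.4 * x - (2 / 25) * Real.sin (5 + t)))
            * deriv (fun x' => 10 - (1 / 2) * Real.cos (5 + t)
                + 4 * Real.tanh (6 + 1.6 * t - 0.4 * x' - (2 / 25) * Real.sin (5 + t))) x
        - 2 * deriv (deriv (fun x' => 10 - (1 / 2) * Real.cos (5 + t)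
                + 4 * Real.tanh (6 + 1.6 * t - 0.4 * x' - (2 / 25) * Real.sin (5 + t)))) x
        = (1 / 2) * Real.sin (5 + t) := by
  intro x t
  -- t-derivative
  have hsin : HasDerivAt (fun t' : ℝ => Real.sin (5 + t')) (Real.cos (5 + t)) t := by
    have := (Real.hasDerivAt_sin (5 + t)).comp t
      ((hasDerivAt_id t).const_add (5 : ℝ))
    simpa [Function.comp_def] using this
  have hcos : HasDerivAt (fun t' : ℝ => Real.cos (5 + t')) (-Real.sin (5 + t)) t := by
    have := (Real.hasDerivAt_cos (5 + t)).comp t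
      ((hasDerivAt_id t).const_add (5 : ℝ))
    simpa [Function.comp_def] using this
  have hθt : HasDerivAt (fun t' : ℝ => 6 + 1.6 * t' - 0.4 * x - (2 / 25) * Real.sin (5 + t'))
      (1.6 - (2 / 25) * Real.cos (5 + t)) t := by
    have h : HasDerivAt (fun t' : ℝ => 6 + 1.6 * t' - 0.4 * x - (2 / 25) * Real.sin (5 + t'))
        (1.6 * 1 - (2 / 25) * Real.cos (5 + t)) t :=
      ((((hasDerivAt_id t).const_mul 1.6).const_add 6).sub_const (0.4 * x)).sub
        (hsin.const_mul (2 / 25))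
    simpa using h
  have hut : HasDerivAt (fun t' => 10 - (1 / 2) * Real.cos (5 + t')
        + 4 * Real.tanh (6 + 1.6 * t' - 0.4 * x - (2 / 25) * Real.sin (5 + t')))
      ((0 - (1 / 2) * (-Real.sin (5 + t)))
        + 4 * ((1 - Real.tanh (6 + 1.6 * t - 0.4 * x - (2 / 25) * Real.sin (5 + t)) ^ 2)
          * (1.6 - (2 / 25) * Real.cos (5 + t)))) t := by
    exact ((hasDerivAt_const t (10 : ℝ)).sub (hcos.const_mul (1 / 2))).add
      (((hasDerivAt_tanh' _).comp t hθt).const_mul 4)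
  -- second x-derivative
  have heq : deriv (fun x' => 10 - (1 / 2) * Real.cos (5 + t)
      + 4 * Real.tanh (6 + 1.6 * t - 0.4 * x' - (2 / 25) * Real.sin (5 + t)))
      = fun x' => 4 * ((1 - Real.tanh
        (6 + 1.6 * t - 0.4 * x' - (2 / 25) * Real.sin (5 + t)) ^ 2) * (-0.4)) := by
    funext y; exact deriv_u_x t y
  have hT := (hasDerivAt_tanh' (6 + 1.6 * t - 0.4 * x - (2 / 25) * Real.sin (5 + t))).comp x
    (hasDerivAt_theta_x t x)
  have hg := ((((hT.pow 2)).const_sub 1).mul_const (-0.4)).const_mul 4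
  simp only [Function.comp, Pi.pow_apply, Function.comp_apply] at hg
  have hd2 := hg.deriv
  rw [← heq] at hd2
  rw [hut.deriv, deriv_u_x t x, hd2]
  norm_num
  ring
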